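/- Let (G, M, I) be a polarity and R_◇ ⊆ M × G a relation such that R_◇^{(0)}[{g}] is Galois-stable for every g ∈ G. Then for every formal concept c of (G, M, I), the pair ⟨R_◇⟩c := ((R_◇^{(0)}[⟦c⟧])^↓, R_◇^{(0)}[⟦c⟧]) is a formal concept, and the map c ↦ ⟨R_◇⟩c is monotone (order-preserving) on the concept lattice. -/

import Mathlib

lemma stable_lowerPolar {G M : Type*} (I : G → M → Prop) (R : M → G → Prop)
    (hcomp : ∀ g : G,
      upperPolar I (lowerPolar I (lowerPolar R {g})) = lowerPolar R {g})
    (s : Set G) :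
    upperPolar I (lowerPolar I (lowerPolar R s)) = lowerPolar R s := by
  have hs : lowerPolar R s = ⋂ g ∈ s, lowerPolar R {g} := by
    conv_lhs => rw [show s = ⋃ g ∈ s, ({g} : Set G) by simp]
    rw [lowerPolar_iUnion₂]
  apply subset_antisymm
  · rw [hs]
    refine Set.subset_iInter₂ fun g hg => ?_
    rw [← hcomp g]
    apply upperPolar_anti
    apply lowerPolar_anti
    exact Set.biInter_subset_of_mem hg
  · exact subset_upperPolar_lowerPolar _ _

/-- Let `(G, M, I)` be a polarity and `R ⊆ M × G` a relation such that
`R^{(0)}[{g}]` is Galois-stable for every `g ∈ G`. Then for every formal concept `c`,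
`⟨R⟩c := ((R^{(0)}[⟦c⟧])^↓, R^{(0)}[⟦c⟧])` is a formal concept, and `c ↦ ⟨R⟩c` is
monotone on the concept lattice. -/
theorem diamond_operator_well_defined_and_monotone {G M : Type*} (I : G → M → Prop)
    (R : M → G → Prop)
    (hcomp : ∀ g : G,
      upperPolar I (lowerPolar I (lowerPolar R {g})) = lowerPolar R {g}) :
    (∀ c : Concept G M I, ∃ d : Concept G M I,
        d.intent = lowerPolar R c.extent ∧ d.extent = lowerPolar I (lowerPolar R c.extent)) ∧
    (∀ c₁ c₂ d₁ d₂ : Concept G M I, d₁.intent = lowerPolar R c₁.extent →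
        d₂.intent = lowerPolar R c₂.extent → c₁ ≤ c₂ → d₁ ≤ d₂) := by
  constructor
  · intro c
    exact ⟨⟨lowerPolar I (lowerPolar R c.extent), lowerPolar R c.extent,
      stable_lowerPolar I R hcomp c.extent, rfl⟩, rfl, rfl⟩
  · intro c₁ c₂ d₁ d₂ h₁ h₂ hle
    show d₁.extent ⊆ d₂.extent
    rw [← d₁.lowerPolar_intent, ← d₂.lowerPolar_intent, h₁, h₂]
    exact lowerPolar_anti _ (lowerPolar_anti _ hle)
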